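/- Let S be a semigroup and let S⁰ denote the semigroup obtained from S by adjoining a new zero element. Then: (1) S is Markov as a semigroup if and only if S⁰ is Markov as a semigroup; (2) S is robustly Markov with respect to some alphabet if and only if S⁰ is robustly Markov with respect to some alphabet; (3) S is strongly Markov if and only if S⁰ is strongly Markov. -/

import Mathlib

open Function

/-- A language is regular if it is accepted by a deterministic finite automaton
with a finite state set. -/
def RegularLang {A : Type} (L : Language A) : Prop :=
  ∃ (Q : Type) (_ : Fintype Q) (M : DFA A Q), M.accepts = L

/-- The product of a nonempty word under the letter-assignment `φ`; the empty
word is sent to `none`. This is the induced map `φ⁺` on nonempty words. -/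
def prodPlus {A S : Type} [Semigroup S] (φ : A → S) : List A → Option S
  | [] => none
  | a :: w => some (w.foldl (fun s b => s * φ b) (φ a))

/-- The induced monoid homomorphism `φ*` from the free monoid of words. -/
def monProd {A M : Type} [Monoid M] (φ : A → M) (w : List A) : M :=
  (w.map φ).prod

/-- A semigroup Markov language for `S` over `A` (with respect to `φ`): a regular,
`+`-prefix-closed language of nonempty words mapping bijectively onto `S` under `φ⁺`. -/
structure IsSgMarkovLang {A S : Type} [Semigroup S] (φ : A → S) (L : Language A) : Prop where
  regular : RegularLang L
  not_empty_mem : [] ∉ L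
  plus_prefix_closed : ∀ u v : List A, u ≠ [] → v ≠ [] → u ++ v ∈ L → u ∈ L
  unique_rep : ∀ s : S, ∃! w : List A, w ∈ L ∧ prodPlus φ w = some s

/-- A robust semigroup Markov language: additionally every word of `L` has minimal
length among (nonempty) words representing the same element. -/
structure IsRobustSgMarkovLang {A S : Type} [Semigroup S] (φ : A → S) (L : Language A)
    extends IsSgMarkovLang φ L : Prop where
  min_length : ∀ w ∈ L, ∀ v : List A, prodPlus φ v = prodPlus φ w → w.length ≤ v.length

/-- A monoid Markov language for `M` over `A` (with respect to `φ`): a regular,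
prefix-closed language mapping bijectively onto `M` under `φ*`. -/
structure IsMonMarkovLang {A M : Type} [Monoid M] (φ : A → M) (L : Language A) : Prop where
  regular : RegularLang L
  prefix_closed : ∀ u v : List A, u ++ v ∈ L → u ∈ L
  unique_rep : ∀ m : M, ∃! w : List A, w ∈ L ∧ monProd φ w = m

/-- A robust monoid Markov language: additionally every word of `L` has minimal
length among words representing the same element. -/
structure IsRobustMonMarkovLang {A M : Type} [Monoid M] (φ : A → M) (L : Language A)
    extends IsMonMarkovLang φ L : Prop where
  min_length : ∀ w ∈ L, ∀ v : List A, monProd φ v = monProd φ w → w.length ≤ v.length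

/-- `S` is Markov as a semigroup. -/
def SgMarkov (S : Type) [Semigroup S] : Prop :=
  ∃ (A : Type) (_ : Fintype A) (φ : A → S),
    (∀ s : S, ∃ w : List A, prodPlus φ w = some s) ∧
    ∃ L : Language A, IsSgMarkovLang φ L

/-- `S` is robustly Markov (as a semigroup) with respect to some alphabet. -/
def SgRobustlyMarkov (S : Type) [Semigroup S] : Prop :=
  ∃ (A : Type) (_ : Fintype A) (φ : A → S),
    (∀ s : S, ∃ w : List A, prodPlus φ w = some s) ∧
    ∃ L : Language A, IsRobustSgMarkovLang φ L

/-- `S` is strongly Markov (as a semigroup). -/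
def SgStronglyMarkov (S : Type) [Semigroup S] : Prop :=
  ∀ (A : Type) [Fintype A] (φ : A → S),
    (∀ s : S, ∃ w : List A, prodPlus φ w = some s) →
    ∃ L : Language A, IsRobustSgMarkovLang φ L

/-- `M` is Markov as a monoid. -/
def MonMarkov (M : Type) [Monoid M] : Prop :=
  ∃ (A : Type) (_ : Fintype A) (φ : A → M),
    Surjective (monProd φ) ∧ ∃ L : Language A, IsMonMarkovLang φ L

/-- `M` is robustly Markov (as a monoid) with respect to some alphabet. -/
def MonRobustlyMarkov (M : Type) [Monoid M] : Prop :=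
  ∃ (A : Type) (_ : Fintype A) (φ : A → M),
    Surjective (monProd φ) ∧ ∃ L : Language A, IsRobustMonMarkovLang φ L

/-- `M` is strongly Markov (as a monoid). -/
def MonStronglyMarkov (M : Type) [Monoid M] : Prop :=
  ∀ (A : Type) [Fintype A] (φ : A → M),
    Surjective (monProd φ) →
    ∃ L : Language A, IsRobustMonMarkovLang φ L

section Helpers
variable {S : Type} [Semigroup S] {A B : Type}

lemma prodPlus_map (g : A → B) (ψ : B → S) (w : List A) :
    prodPlus ψ (w.map g) = prodPlus (ψ ∘ g) w := by
  cases w with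
  | nil => rfl
  | cons a t => simp [prodPlus, List.foldl_map, Function.comp]

lemma foldl_coe (ψ : A → S) (t : List A) (x : S) :
    t.foldl (fun s b => s * (ψ b : WithZero S)) (x : WithZero S)
      = ↑(t.foldl (fun s b => s * ψ b) x) := by
  induction t generalizing x with
  | nil => rfl
  | cons b t ih => simp only [List.foldl_cons, ← WithZero.coe_mul, ih]

lemma prodPlus_coe (ψ : A → S) (w : List A) :
    prodPlus (fun a => (ψ a : WithZero S)) w
      = Option.map (fun s : S => (s : WithZero S)) (prodPlus ψ w) := by
  cases w with
  | nil => rfl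
  | cons a t => simp [prodPlus, foldl_coe]

lemma foldl_zero (φB : B → WithZero S) (t : List B) :
    t.foldl (fun s b => s * φB b) 0 = 0 := by
  induction t with
  | nil => rfl
  | cons b t ih => simpa using ih

lemma foldl_eq_zero (φB : B → WithZero S) (t : List B) (x : WithZero S)
    (h : ∃ b ∈ t, φB b = 0) : t.foldl (fun s b => s * φB b) x = 0 := by
  induction t generalizing x with
  | nil => simp at h
  | cons c t ih =>
    rcases h with ⟨b, hb, hb0⟩
    rcases List.mem_cons.1 hb with rfl | hb
    · simp only [List.foldl_cons, hb0, mul_zero]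
      exact foldl_zero φB t
    · exact ih _ ⟨b, hb, hb0⟩

lemma prodPlus_eq_zero (φB : B → WithZero S) {w : List B} (h : ∃ b ∈ w, φB b = 0) :
    prodPlus φB w = some 0 := by
  cases w with
  | nil => simp at h
  | cons a t =>
    rcases h with ⟨b, hb, hb0⟩
    rcases List.mem_cons.1 hb with rfl | hb
    · simp [prodPlus, hb0, foldl_zero]
    · simp [prodPlus, foldl_eq_zero φB t _ ⟨b, hb, hb0⟩]

lemma letters_ne_zero {φB : B → WithZero S} {w : List B} {x : WithZero S}
    (hw : prodPlus φB w = some x) (hx : x ≠ 0) : ∀ b ∈ w, φB b ≠ 0 := by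
  intro b hb h0
  rw [prodPlus_eq_zero φB ⟨b, hb, h0⟩] at hw
  exact hx (Option.some_injective _ hw).symm

lemma foldl_ne_zero (φB : B → WithZero S) (t : List B) (x : WithZero S) (hx : x ≠ 0)
    (h : ∀ b ∈ t, φB b ≠ 0) : t.foldl (fun s b => s * φB b) x ≠ 0 := by
  induction t generalizing x with
  | nil => simpa
  | cons c t ih =>
    simp only [List.foldl_cons]
    exact ih _ (mul_ne_zero hx (h c (by simp))) (fun b hb => h b (by simp [hb]))

lemma exists_zero_letter {φB : B → WithZero S} {w : List B}
    (hw : prodPlus φB w = some 0) : ∃ b ∈ w, φB b = 0 := by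
  by_contra h
  push_neg at h
  cases w with
  | nil => simp [prodPlus] at hw
  | cons a t =>
    simp only [prodPlus] at hw
    exact foldl_ne_zero φB t (φB a) (h a (by simp)) (fun b hb => h b (by simp [hb]))
      (Option.some_injective _ hw)

lemma exists_map_eq (g : A → B) {w : List B} (h : ∀ b ∈ w, b ∈ Set.range g) :
    ∃ v : List A, v.map g = w := by
  induction w with
  | nil => exact ⟨[], rfl⟩
  | cons b t ih =>
    obtain ⟨a, rfl⟩ := h b List.mem_cons_self
    obtain ⟨v, hv⟩ := ih (fun c hc => h c (List.mem_cons_of_mem _ hc))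
    exact ⟨a :: v, by simp [hv]⟩

end Helpers


section Regular
variable {A B : Type}

lemma regular_preimage (g : A → B) {L : Language B} (h : RegularLang L) :
    RegularLang {w : List A | List.map g w ∈ L} := by
  obtain ⟨Q, hQ, M, hM⟩ := h
  exact ⟨Q, hQ, M.comap g, by rw [DFA.accepts_comap, hM]; rfl⟩

lemma regular_union {L₁ L₂ : Language A} (h₁ : RegularLang L₁) (h₂ : RegularLang L₂) :
    RegularLang {w : List A | w ∈ L₁ ∨ w ∈ L₂} := by
  obtain ⟨Q₁, i₁, M₁, hM₁⟩ := h₁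
  obtain ⟨Q₂, i₂, M₂, hM₂⟩ := h₂
  subst hM₁; subst hM₂
  set N : DFA A (Q₁ × Q₂) :=
    ⟨fun p a => (M₁.step p.1 a, M₂.step p.2 a), (M₁.start, M₂.start),
      {p | p.1 ∈ M₁.accept ∨ p.2 ∈ M₂.accept}⟩ with hN
  have key : ∀ (w : List A) (q₁ : Q₁) (q₂ : Q₂),
      N.evalFrom (q₁, q₂) w = (M₁.evalFrom q₁ w, M₂.evalFrom q₂ w) := by
    intro w
    induction w with
    | nil => intro q₁ q₂; rfl
    | cons a t ih => intro q₁ q₂; exact ih _ _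
  refine ⟨Q₁ × Q₂, inferInstance, N, ?_⟩
  ext w
  rw [DFA.mem_accepts]
  show N.evalFrom (M₁.start, M₂.start) w ∈ N.accept ↔ _
  rw [key]
  simp only [DFA.mem_accepts, DFA.eval]
  rfl

lemma regular_single (z : B) : RegularLang {w : List B | w = [z]} := by
  classical
  refine ⟨Option Bool, inferInstance,
    ⟨fun q b => match q with
      | none => if b = z then some true else some false
      | some _ => some false, none, {some true}⟩, ?_⟩
  set M : DFA B (Option Bool) :=
    ⟨fun q b => match q with
      | none => if b = z then some true else some false
      | some _ => some false, none, {some true}⟩ with hMdef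
  have hdead : ∀ w : List B, M.evalFrom (some false) w = some false := by
    intro w; induction w with
    | nil => rfl
    | cons b t ih => exact ih
  ext w
  rw [DFA.mem_accepts]
  cases w with
  | nil =>
    simp only [DFA.eval, DFA.evalFrom, List.foldl_nil, Set.mem_setOf_eq]
    constructor
    · intro h; exact absurd (show (none : Option Bool) = some true from h) (by simp)
    · intro h; exact absurd (show ([] : List B) = [z] from h) (by simp)
  | cons b t =>
    show M.evalFrom (M.step none b) t ∈ M.accept ↔ _
    by_cases hb : b = z
    · subst hb
      have : M.step none b = some true := by simp [hMdef]
      rw [this]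
      cases t with
      | nil =>
        constructor
        · intro _; exact rfl
        · intro _; exact rfl
      | cons c t' =>
        have : M.evalFrom (some true) (c :: t') = some false := by
          show M.evalFrom (M.step (some true) c) t' = some false
          have : M.step (some true) c = some false := rfl
          rw [this]; exact hdead t'
        rw [this]
        constructor
        · intro h; exact absurd h (by simp [hMdef])
        · intro h; exact absurd (List.cons.inj h).2 (by simp)
    · have : M.step none b = some false := by simp [hMdef, hb]
      rw [this, hdead t]
      change _ ↔ b :: t = [z]
      constructor
      · intro h; exact absurd h (by simp [hMdef])
      · intro h
        exact absurd (by injection h : b = z) hb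

lemma regular_image {g : A → B} (hg : Injective g) {L : Language A} (h : RegularLang L) :
    RegularLang ((List.map g '' L : Set (List B)) : Language B) := by
  classical
  obtain ⟨Q, iQ, M, hM⟩ := h
  subst hM
  set M' : DFA B (Option Q) :=
    ⟨fun q b => q.bind fun q' => if h : ∃ a, g a = b then some (M.step q' h.choose) else none,
      some M.start, some '' M.accept⟩ with hM'
  have hnone : ∀ w : List B, M'.evalFrom none w = none := by
    intro w; induction w with
    | nil => rfl
    | cons b t ih => exact ih
  have key : ∀ (w : List B) (q : Q) (p : Q),
      M'.evalFrom (some q) w = some p ↔ ∃ v : List A, v.map g = w ∧ M.evalFrom q v = p := by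
    intro w
    induction w with
    | nil =>
      intro q p
      constructor
      · intro h; exact ⟨[], rfl, (Option.some_injective _ h)⟩
      · rintro ⟨v, hv, hev⟩
        rw [List.map_eq_nil_iff] at hv; subst hv
        exact congrArg some hev
    | cons b t ih =>
      intro q p
      by_cases hb : ∃ a, g a = b
      · have hstep : M'.step (some q) b = some (M.step q hb.choose) := by
          simp [hM', hb]
        constructor
        · intro h
          rw [show M'.evalFrom (some q) (b :: t) = M'.evalFrom (M'.step (some q) b) t from rfl,
            hstep, ih] at h
          obtain ⟨v, hv, hev⟩ := h
          exact ⟨hb.choose :: v, by simp [hv, hb.choose_spec], hev⟩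
        · rintro ⟨v, hv, hev⟩
          cases v with
          | nil => simp at hv
          | cons a v' =>
            simp only [List.map_cons, List.cons.injEq] at hv
            obtain ⟨hab, hv'⟩ := hv
            have ha : hb.choose = a := hg (by rw [hb.choose_spec, ← hab])
            rw [show M'.evalFrom (some q) (b :: t) = M'.evalFrom (M'.step (some q) b) t from rfl,
              hstep, ih]
            exact ⟨v', hv', by rw [ha]; exact hev⟩
      · have hstep : M'.step (some q) b = none := by simp [hM', hb]
        constructor
        · intro h
          rw [show M'.evalFrom (some q) (b :: t) = M'.evalFrom (M'.step (some q) b) t from rfl,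
            hstep, hnone] at h
          exact absurd h (by simp)
        · rintro ⟨v, hv, hev⟩
          cases v with
          | nil => simp at hv
          | cons a v' =>
            simp only [List.map_cons, List.cons.injEq] at hv
            exact absurd ⟨a, hv.1⟩ hb
  refine ⟨Option Q, inferInstance, M', ?_⟩
  ext w
  rw [DFA.mem_accepts]
  show M'.evalFrom (some M.start) w ∈ some '' M.accept ↔ _
  constructor
  · intro h
    obtain ⟨p, hp, hep⟩ := h
    rw [eq_comm, key] at hep
    obtain ⟨v, hv, hev⟩ := hep
    refine ⟨v, ?_, hv⟩
    show M.evalFrom M.start v ∈ M.accept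
    rw [hev]; exact hp
  · rintro ⟨v, hv, rfl⟩
    replace hv : M.evalFrom M.start v ∈ M.accept := hv
    exact ⟨M.evalFrom M.start v, hv, ((key _ _ _).2 ⟨v, rfl, rfl⟩).symm⟩

end Regular

section Main
variable {S A B : Type} [Semigroup S] {g : A → B} {φ : A → S} {φB : B → WithZero S}

lemma prodPlus_up (hgφ : ∀ a, φB (g a) = ↑(φ a)) (w : List A) :
    prodPlus φB (w.map g) = Option.map (fun s : S => (s : WithZero S)) (prodPlus φ w) := by
  rw [prodPlus_map]
  have h : φB ∘ g = fun a => ((φ a : WithZero S)) := funext hgφ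
  rw [h, prodPlus_coe]

lemma coe_map_eq {o : Option S} {s : S}
    (h : Option.map (fun t : S => (t : WithZero S)) o = some ↑s) : o = some s := by
  cases o with
  | none => simp at h
  | some y =>
    simp only [Option.map_some] at h
    exact congrArg some (WithZero.coe_inj.1 (Option.some_injective _ h))

lemma prodPlus_some (ψ : A → S) {w : List A} (hw : w ≠ []) : ∃ y, prodPlus ψ w = some y := by
  cases w with
  | nil => exact absurd rfl hw
  | cons a t => exact ⟨_, rfl⟩

lemma map_ne_nil {w : List A} (hw : w ≠ []) : w.map g ≠ [] :=
  fun h => hw (List.map_eq_nil_iff.1 h)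

lemma up_markov (hg : Injective g) (hgφ : ∀ a, φB (g a) = ↑(φ a)) {z : B} (hz : φB z = 0)
    (hcover : ∀ b, φB b ≠ 0 → b ∈ Set.range g) {L : Language A} (hL : IsSgMarkovLang φ L) :
    IsSgMarkovLang φB {w : List B | w ∈ (List.map g '' L : Set (List B)) ∨ w = [z]} where
  regular := regular_union (regular_image hg hL.regular) (regular_single z)
  not_empty_mem := by
    rintro (⟨v, hv, hmap⟩ | h)
    · exact hL.not_empty_mem (List.map_eq_nil_iff.1 hmap ▸ hv)
    · exact absurd h (by simp)
  plus_prefix_closed := by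
    rintro u v hu hv (⟨w₁, hw₁, hmap⟩ | h)
    · obtain ⟨u₀, v₀, rfl, hu₀, hv₀⟩ := List.map_eq_append_iff.1 hmap
      have hu0 : u₀ ≠ [] := by rintro rfl; exact hu hu₀.symm
      have hv0 : v₀ ≠ [] := by rintro rfl; exact hv hv₀.symm
      exact Or.inl ⟨u₀, hL.plus_prefix_closed u₀ v₀ hu0 hv0 hw₁, hu₀⟩
    · exfalso
      have h1 : 1 ≤ u.length := List.length_pos_iff.2 hu
      have h2 : 1 ≤ v.length := List.length_pos_iff.2 hv
      have := congrArg List.length h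
      simp only [List.length_append, List.length_cons, List.length_nil] at this
      omega
  unique_rep := by
    intro x
    rcases eq_or_ne x 0 with rfl | hx
    · refine ⟨[z], ⟨Or.inr rfl, by simp [prodPlus, hz]⟩, ?_⟩
      rintro w' ⟨⟨v, hv, rfl⟩ | rfl, hpp⟩
      · exfalso
        have hvne : v ≠ [] := fun h => hL.not_empty_mem (h ▸ hv)
        obtain ⟨y, hy⟩ := prodPlus_some φ hvne
        rw [prodPlus_up hgφ, hy] at hpp
        exact WithZero.coe_ne_zero (Option.some_injective _ hpp)
      · rfl
    · obtain ⟨s, rfl⟩ := WithZero.ne_zero_iff_exists.1 hx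
      obtain ⟨w, ⟨hwL, hwp⟩, huniq⟩ := hL.unique_rep s
      refine ⟨w.map g, ⟨Or.inl ⟨w, hwL, rfl⟩, by rw [prodPlus_up hgφ, hwp]; rfl⟩, ?_⟩
      rintro w' ⟨⟨v, hv, rfl⟩ | rfl, hpp⟩
      · have hvne : v ≠ [] := fun h => hL.not_empty_mem (h ▸ hv)
        rw [prodPlus_up hgφ] at hpp
        have := huniq v ⟨hv, coe_map_eq hpp⟩
        rw [this]
      · exfalso
        simp only [prodPlus, List.foldl_nil, hz] at hpp
        exact WithZero.coe_ne_zero ((Option.some_injective _ hpp)).symm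

lemma up_robust (hg : Injective g) (hgφ : ∀ a, φB (g a) = ↑(φ a)) {z : B} (hz : φB z = 0)
    (hcover : ∀ b, φB b ≠ 0 → b ∈ Set.range g) {L : Language A}
    (hL : IsRobustSgMarkovLang φ L) :
    IsRobustSgMarkovLang φB {w : List B | w ∈ (List.map g '' L : Set (List B)) ∨ w = [z]} where
  toIsSgMarkovLang := up_markov hg hgφ hz hcover hL.toIsSgMarkovLang
  min_length := by
    rintro w' (⟨w, hwL, rfl⟩ | rfl) v' hpp
    · have hwne : w ≠ [] := fun h => hL.not_empty_mem (h ▸ hwL)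
      obtain ⟨y, hy⟩ := prodPlus_some φ hwne
      rw [prodPlus_up hgφ, hy] at hpp
      have hlet : ∀ b ∈ v', b ∈ Set.range g :=
        fun b hb => hcover b (letters_ne_zero hpp WithZero.coe_ne_zero b hb)
      obtain ⟨v₀, rfl⟩ := exists_map_eq g hlet
      rw [prodPlus_up hgφ] at hpp
      have := hL.min_length w hwL v₀ (by rw [coe_map_eq hpp, hy])
      simpa using this
    · have : v' ≠ [] := by
        rintro rfl
        simp [prodPlus, hz] at hpp
      have h1 : 1 ≤ v'.length := List.length_pos_iff.2 this
      simpa using h1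

lemma down_surj (hgφ : ∀ a, φB (g a) = ↑(φ a)) (hcover : ∀ b, φB b ≠ 0 → b ∈ Set.range g)
    (hs : ∀ s : S, ∃ w', prodPlus φB w' = some ↑s) :
    ∀ s : S, ∃ w : List A, prodPlus φ w = some s := by
  intro s
  obtain ⟨w', hw'⟩ := hs s
  have hlet : ∀ b ∈ w', b ∈ Set.range g :=
    fun b hb => hcover b (letters_ne_zero hw' WithZero.coe_ne_zero b hb)
  obtain ⟨v, rfl⟩ := exists_map_eq g hlet
  rw [prodPlus_up hgφ] at hw'
  exact ⟨v, coe_map_eq hw'⟩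

lemma down_markov (hg : Injective g) (hgφ : ∀ a, φB (g a) = ↑(φ a))
    (hcover : ∀ b, φB b ≠ 0 → b ∈ Set.range g) {L' : Language B}
    (hL' : IsSgMarkovLang φB L') :
    IsSgMarkovLang φ {w : List A | w.map g ∈ L'} where
  regular := regular_preimage g hL'.regular
  not_empty_mem := hL'.not_empty_mem
  plus_prefix_closed := by
    intro u v hu hv h
    have : (u.map g) ++ (v.map g) ∈ L' := by rw [← List.map_append]; exact h
    exact hL'.plus_prefix_closed _ _ (map_ne_nil hu) (map_ne_nil hv) this
  unique_rep := by
    intro s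
    obtain ⟨w', ⟨hw'L, hw'p⟩, huniq⟩ := hL'.unique_rep (↑s : WithZero S)
    have hlet : ∀ b ∈ w', b ∈ Set.range g :=
      fun b hb => hcover b (letters_ne_zero hw'p WithZero.coe_ne_zero b hb)
    obtain ⟨w₀, rfl⟩ := exists_map_eq g hlet
    rw [prodPlus_up hgφ] at hw'p
    refine ⟨w₀, ⟨hw'L, coe_map_eq hw'p⟩, ?_⟩
    intro w₁ ⟨h1, h2⟩
    have : w₁.map g = w₀.map g := huniq (w₁.map g) ⟨h1, by rw [prodPlus_up hgφ, h2]; rfl⟩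
    exact List.map_injective_iff.2 hg this
  
lemma down_robust (hg : Injective g) (hgφ : ∀ a, φB (g a) = ↑(φ a))
    (hcover : ∀ b, φB b ≠ 0 → b ∈ Set.range g) {L' : Language B}
    (hL' : IsRobustSgMarkovLang φB L') :
    IsRobustSgMarkovLang φ {w : List A | w.map g ∈ L'} where
  toIsSgMarkovLang := down_markov hg hgφ hcover hL'.toIsSgMarkovLang
  min_length := by
    intro w hw v hpv
    have := hL'.min_length (w.map g) hw (v.map g)
      (by rw [prodPlus_up hgφ, prodPlus_up hgφ, hpv])
    simpa using this

end Main


/-- Adjoining a zero: `S` is Markov (resp. robustly Markov with respect to some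
alphabet, strongly Markov) iff `S⁰` is. -/
theorem stmt16 {S : Type} [Semigroup S] :
    (SgMarkov S ↔ SgMarkov (WithZero S)) ∧
    (SgRobustlyMarkov S ↔ SgRobustlyMarkov (WithZero S)) ∧
    (SgStronglyMarkov S ↔ SgStronglyMarkov (WithZero S)) := by
  classical
  -- the "up" data for an alphabet `A` with `φ : A → S`
  have upData : ∀ (A : Type) (φ : A → S) (a : A),
      (Sum.elim (fun a => ((φ a : WithZero S))) (fun _ => (0 : WithZero S)) : A ⊕ Unit → WithZero S)
        (Sum.inl a) = ↑(φ a) := fun _ _ _ => rfl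
  have hsum_cover : ∀ (A : Type) (φ : A → S) (b : A ⊕ Unit),
      (Sum.elim (fun a => ((φ a : WithZero S))) (fun _ => (0 : WithZero S)) : A ⊕ Unit → WithZero S) b ≠ 0 →
      b ∈ Set.range (Sum.inl : A → A ⊕ Unit) := by
    rintro A φ (a | u) hb
    · exact ⟨a, rfl⟩
    · exact absurd rfl hb
  have hsum_surj : ∀ (A : Type) (φ : A → S),
      (∀ s : S, ∃ w : List A, prodPlus φ w = some s) →
      ∀ x : WithZero S, ∃ w : List (A ⊕ Unit),
        prodPlus (Sum.elim (fun a => ((φ a : WithZero S))) (fun _ => (0 : WithZero S)) :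
          A ⊕ Unit → WithZero S) w = some x := by
    intro A φ hsurj x
    rcases eq_or_ne x 0 with rfl | hx
    · exact ⟨[Sum.inr ()], rfl⟩
    · obtain ⟨s, rfl⟩ := WithZero.ne_zero_iff_exists.1 hx
      obtain ⟨w, hw⟩ := hsurj s
      exact ⟨w.map Sum.inl, by rw [prodPlus_up (upData A φ), hw]; rfl⟩
  refine ⟨⟨?_, ?_⟩, ⟨?_, ?_⟩, ⟨?_, ?_⟩⟩
  · -- Markov up
    rintro ⟨A, iA, φ, hsurj, L, hL⟩
    exact ⟨A ⊕ Unit, inferInstance, _, hsum_surj A φ hsurj,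
      _, up_markov (z := Sum.inr ()) Sum.inl_injective (upData A φ) rfl (hsum_cover A φ) hL⟩
  · -- Markov down
    rintro ⟨B, iB, φB, hsurjB, L', hL'⟩
    haveI : DecidablePred (fun b : B => φB b ≠ 0) := Classical.decPred _
    refine ⟨{b : B // φB b ≠ 0}, Subtype.fintype _, fun a => WithZero.unzero a.2, ?_, ?_⟩
    · exact down_surj (g := Subtype.val) (fun (a : {b : B // φB b ≠ 0}) => (WithZero.coe_unzero a.2).symm)
        (fun b (hb : φB b ≠ 0) => ⟨⟨b, hb⟩, rfl⟩) (fun s => hsurjB ↑s)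
    · exact ⟨_, down_markov Subtype.val_injective (fun (a : {b : B // φB b ≠ 0}) => (WithZero.coe_unzero a.2).symm)
        (fun b (hb : φB b ≠ 0) => ⟨⟨b, hb⟩, rfl⟩) hL'⟩
  · -- robustly Markov up
    rintro ⟨A, iA, φ, hsurj, L, hL⟩
    exact ⟨A ⊕ Unit, inferInstance, _, hsum_surj A φ hsurj,
      _, up_robust (z := Sum.inr ()) Sum.inl_injective (upData A φ) rfl (hsum_cover A φ) hL⟩
  · -- robustly Markov down
    rintro ⟨B, iB, φB, hsurjB, L', hL'⟩
    haveI : DecidablePred (fun b : B => φB b ≠ 0) := Classical.decPred _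
    refine ⟨{b : B // φB b ≠ 0}, Subtype.fintype _, fun a => WithZero.unzero a.2, ?_, ?_⟩
    · exact down_surj (g := Subtype.val) (fun (a : {b : B // φB b ≠ 0}) => (WithZero.coe_unzero a.2).symm)
        (fun b (hb : φB b ≠ 0) => ⟨⟨b, hb⟩, rfl⟩) (fun s => hsurjB ↑s)
    · exact ⟨_, down_robust Subtype.val_injective (fun (a : {b : B // φB b ≠ 0}) => (WithZero.coe_unzero a.2).symm)
        (fun b (hb : φB b ≠ 0) => ⟨⟨b, hb⟩, rfl⟩) hL'⟩
  · -- strongly Markov up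
    intro hS B iB φB hsurjB
    haveI : DecidablePred (fun b : B => φB b ≠ 0) := Classical.decPred _
    haveI : Fintype {b : B // φB b ≠ 0} := Subtype.fintype _
    have hsurjA : ∀ s : S, ∃ w : List {b : B // φB b ≠ 0},
        prodPlus (fun a => WithZero.unzero a.2) w = some s :=
      down_surj (g := Subtype.val) (fun (a : {b : B // φB b ≠ 0}) => (WithZero.coe_unzero a.2).symm)
        (fun b (hb : φB b ≠ 0) => ⟨⟨b, hb⟩, rfl⟩) (fun s => hsurjB ↑s)
    obtain ⟨L₁, hL₁⟩ := hS {b : B // φB b ≠ 0} (fun a => WithZero.unzero a.2) hsurjA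
    obtain ⟨w₀, hw₀⟩ := hsurjB 0
    obtain ⟨z, _, hz⟩ := exists_zero_letter hw₀
    exact ⟨_, up_robust Subtype.val_injective (fun (a : {b : B // φB b ≠ 0}) => (WithZero.coe_unzero a.2).symm) hz
      (fun b (hb : φB b ≠ 0) => ⟨⟨b, hb⟩, rfl⟩) hL₁⟩
  · -- strongly Markov down
    intro hS0 A iA φ hsurj
    obtain ⟨L', hL'⟩ := hS0 (A ⊕ Unit) _ (hsum_surj A φ hsurj)
    exact ⟨_, down_robust Sum.inl_injective (upData A φ) (hsum_cover A φ) hL'⟩
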